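/- Suppose for every t ≥ 0, e_{t+1} = γ · (P'_t e_t), where γ ∈ [0,1], each P'_t is an n×n row-stochastic matrix, (P*)^N has all positive entries for some row-stochastic P* and some N ≥ 1, and P*(i,j) > 0 implies P'_t(i,j) ≥ δ' > 0 for all t,i,j. Then span(e_N) ≤ γ^N · (1 − n·δ'^N) · span(e_0). -/
import Mathlib


/-- `span v = max v - min v`. -/
noncomputable def spanv {n : ℕ} (v : Fin n → ℝ) : ℝ :=
  (⨆ i, v i) - (⨅ i, v i)

/-- Backward product `P'_{k-1} ⋯ P'_0`. -/
noncomputable def prodP {n : ℕ} (P' : ℕ → Matrix (Fin n) (Fin n) ℝ) : ℕ → Matrix (Fin n) (Fin n) ℝ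
  | 0 => 1
  | k + 1 => P' k * prodP P' k

/-- Core estimate of Theorem 3.3: if `e_{t+1} = γ P'_t e_t` with row-stochastic
`P'_t` dominating the positivity pattern of `P*` (whose `N`-th power is
entrywise positive) with entries at least `δ'`, then
`span e_N ≤ γ^N (1 - n δ'^N) span e₀`. -/
theorem value_iteration_span_contraction (n N : ℕ) (hN : 1 ≤ N)
    (γ : ℝ) (hγ0 : 0 ≤ γ) (hγ1 : γ ≤ 1)
    (P' : ℕ → Matrix (Fin n) (Fin n) ℝ)
    (Pstar : Matrix (Fin n) (Fin n) ℝ)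
    (hPnonneg : ∀ t i j, 0 ≤ P' t i j)
    (hProw : ∀ t i, ∑ j, P' t i j = 1)
    (hSnonneg : ∀ i j, 0 ≤ Pstar i j)
    (hSrow : ∀ i, ∑ j, Pstar i j = 1)
    (hpos : ∀ i j, 0 < (Pstar ^ N) i j)
    (δ' : ℝ) (hδ : 0 < δ')
    (hdom : ∀ t i j, 0 < Pstar i j → δ' ≤ P' t i j)
    (hnδ : (n : ℝ) * δ' ^ N ≤ 1)
    (e : ℕ → Fin n → ℝ)
    (hdyn : ∀ t, e (t + 1) = γ • (P' t).mulVec (e t)) :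
    spanv (e N) ≤ γ ^ N * (1 - (n : ℝ) * δ' ^ N) * spanv (e 0) := by
  rcases Nat.eq_zero_or_pos n with hn | hn
  · subst hn
    simp [spanv, iSup_of_empty', iInf_of_isEmpty, Real.sSup_empty, Real.sInf_empty]
  haveI : Nonempty (Fin n) := Fin.pos_iff_nonempty.mp hn
  set F := prodP P'
  -- nonnegativity of F
  have hFnn : ∀ k i j, 0 ≤ F k i j := by
    intro k
    induction k with
    | zero => intro i j; simp [F, prodP, Matrix.one_apply]; positivity
    | succ k ih =>
      intro i j
      show 0 ≤ (P' k * F k) i j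
      rw [Matrix.mul_apply]
      exact Finset.sum_nonneg fun l _ => mul_nonneg (hPnonneg k i l) (ih l j)
  -- row sums of F
  have hFrow : ∀ k i, ∑ j, F k i j = 1 := by
    intro k
    induction k with
    | zero => intro i; simp [F, prodP, Matrix.one_apply]
    | succ k ih =>
      intro i
      have : ∀ j, (P' k * F k) i j = ∑ l, P' k i l * F k l j := fun j => Matrix.mul_apply
      show ∑ j, (P' k * F k) i j = 1
      simp only [this]
      rw [Finset.sum_comm]
      calc ∑ l, ∑ j, P' k i l * F k l j = ∑ l, P' k i l * ∑ j, F k l j := by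
            simp [Finset.mul_sum]
        _ = 1 := by simp only [ih, mul_one]; exact hProw k i
  -- entrywise lower bound via positivity pattern of Pstar
  have hSk : ∀ k i j, 0 ≤ (Pstar ^ k) i j := by
    intro k
    induction k with
    | zero => intro i j; simp [Matrix.one_apply]; positivity
    | succ k ih =>
      intro i j
      rw [pow_succ', Matrix.mul_apply]
      exact Finset.sum_nonneg fun l _ => mul_nonneg (hSnonneg i l) (ih l j)
  have hFδ : ∀ k i j, 0 < (Pstar ^ k) i j → δ' ^ k ≤ F k i j := by
    intro k
    induction k with
    | zero =>
      intro i j h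
      simp only [pow_zero, Matrix.one_apply] at h ⊢
      by_cases hij : i = j
      · simp [F, prodP, Matrix.one_apply, hij]
      · simp [hij] at h
    | succ k ih =>
      intro i j h
      rw [pow_succ', Matrix.mul_apply] at h
      obtain ⟨l, -, hl⟩ := Finset.exists_lt_of_sum_lt (by simpa using h : ∑ x : Fin n, (0:ℝ) < ∑ x, Pstar i x * (Pstar ^ k) x j)
      have h1 : 0 < Pstar i l := by
        by_contra hc
        push_neg at hc
        have : Pstar i l = 0 := le_antisymm hc (hSnonneg i l)
        simp [this] at hl
      have h2 : 0 < (Pstar ^ k) l j := by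
        by_contra hc
        push_neg at hc
        have hnn : 0 ≤ (Pstar ^ k) l j := hSk k l j
        nlinarith [hl]
      have hP : δ' ≤ P' k i l := hdom k i l h1
      have hF : δ' ^ k ≤ F k l j := ih l j h2
      have : δ' * δ' ^ k ≤ P' k i l * F k l j :=
        mul_le_mul hP hF (le_of_lt (pow_pos hδ k)) ((hδ.le).trans hP)
      calc δ' ^ (k + 1) = δ' * δ' ^ k := by ring
        _ ≤ P' k i l * F k l j := this
        _ ≤ ∑ x, P' k i x * F k x j := Finset.single_le_sum
              (fun x _ => mul_nonneg (hPnonneg k i x) (hFnn k x j)) (Finset.mem_univ l)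
        _ = (P' k * F k) i j := (Matrix.mul_apply).symm
        _ = F (k + 1) i j := rfl
  -- closed form for e
  have he : ∀ k, e k = γ ^ k • (F k).mulVec (e 0) := by
    intro k
    induction k with
    | zero => simp [F, prodP]
    | succ k ih =>
      rw [hdyn k, ih, Matrix.mulVec_smul, smul_smul]
      show (γ * γ ^ k) • (P' k).mulVec ((F k).mulVec (e 0)) = _
      rw [Matrix.mulVec_mulVec, ← pow_succ']
      rfl
  -- main estimate
  set δ := δ' ^ N with hδdef
  have hδ0 : 0 ≤ δ := le_of_lt (pow_pos hδ N)
  have hQδ : ∀ i j, δ ≤ F N i j := fun i j => hFδ N i j (hpos i j)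
  set v := e 0
  have hbdd : BddAbove (Set.range v) := Set.Finite.bddAbove (Set.finite_range v)
  have hbddb : BddBelow (Set.range v) := Set.Finite.bddBelow (Set.finite_range v)
  set M := ⨆ i, v i with hM
  set m := ⨅ i, v i with hm
  have hvM : ∀ j, v j ≤ M := fun j => le_ciSup hbdd j
  have hmv : ∀ j, m ≤ v j := fun j => ciInf_le hbddb j
  set S := ∑ j, v j with hS
  have hrest : ∀ i, ∑ j, (F N i j - δ) = 1 - (n : ℝ) * δ := by
    intro i
    rw [Finset.sum_sub_distrib, hFrow N i]
    simp [mul_comm]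
  have hup : ∀ i, (F N).mulVec v i ≤ δ * S + (1 - (n:ℝ)*δ) * M := by
    intro i
    have : (F N).mulVec v i = ∑ j, δ * v j + ∑ j, (F N i j - δ) * v j := by
      rw [← Finset.sum_add_distrib]
      simp [Matrix.mulVec, dotProduct]
      congr 1; funext j; ring
    rw [this]
    have h1 : ∑ j, δ * v j = δ * S := by rw [hS, Finset.mul_sum]
    have h2 : ∑ j, (F N i j - δ) * v j ≤ (1 - (n:ℝ)*δ) * M := by
      calc ∑ j, (F N i j - δ) * v j ≤ ∑ j, (F N i j - δ) * M :=
            Finset.sum_le_sum fun j _ =>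
              mul_le_mul_of_nonneg_left (hvM j) (sub_nonneg.mpr (hQδ i j))
        _ = (1 - (n:ℝ)*δ) * M := by rw [← Finset.sum_mul, hrest i]
    linarith
  have hlo : ∀ i, δ * S + (1 - (n:ℝ)*δ) * m ≤ (F N).mulVec v i := by
    intro i
    have : (F N).mulVec v i = ∑ j, δ * v j + ∑ j, (F N i j - δ) * v j := by
      rw [← Finset.sum_add_distrib]
      simp [Matrix.mulVec, dotProduct]
      congr 1; funext j; ring
    rw [this]
    have h1 : ∑ j, δ * v j = δ * S := by rw [hS, Finset.mul_sum]
    have h2 : (1 - (n:ℝ)*δ) * m ≤ ∑ j, (F N i j - δ) * v j := by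
      calc (1 - (n:ℝ)*δ) * m = ∑ j, (F N i j - δ) * m := by rw [← Finset.sum_mul, hrest i]
        _ ≤ ∑ j, (F N i j - δ) * v j :=
            Finset.sum_le_sum fun j _ =>
              mul_le_mul_of_nonneg_left (hmv j) (sub_nonneg.mpr (hQδ i j))
    linarith
  have hγN : (0:ℝ) ≤ γ ^ N := pow_nonneg hγ0 N
  have heN : ∀ i, e N i = γ ^ N * (F N).mulVec v i := by
    intro i; rw [he N]; rfl
  have hub : ∀ i, e N i ≤ γ ^ N * (δ * S + (1 - (n:ℝ)*δ) * M) := by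
    intro i; rw [heN i]; exact mul_le_mul_of_nonneg_left (hup i) hγN
  have hlb : ∀ i, γ ^ N * (δ * S + (1 - (n:ℝ)*δ) * m) ≤ e N i := by
    intro i; rw [heN i]; exact mul_le_mul_of_nonneg_left (hlo i) hγN
  have hsup : (⨆ i, e N i) ≤ γ ^ N * (δ * S + (1 - (n:ℝ)*δ) * M) := ciSup_le hub
  have hinf : γ ^ N * (δ * S + (1 - (n:ℝ)*δ) * m) ≤ ⨅ i, e N i := le_ciInf hlb
  have : spanv (e N) ≤ γ ^ N * (1 - (n:ℝ)*δ) * (M - m) := by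
    unfold spanv
    nlinarith [hsup, hinf]
  have hspan0 : spanv v = M - m := rfl
  calc spanv (e N) ≤ γ ^ N * (1 - (n:ℝ)*δ) * (M - m) := this
    _ = γ ^ N * (1 - (n : ℝ) * δ' ^ N) * spanv (e 0) := by rw [hspan0]
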